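/- Let k ≥ 1 and let T ⊂ ℝ be a globally k-thick set containing 0. Suppose {J_n} is a collection of pairwise disjoint open intervals in ℝ, each of finite length ℓ_n, and suppose each J_n sits inside an open interval I_n with J_n ± 2k·ℓ_n ⊆ I_n, where the I_n are pairwise disjoint and 0 ∉ ⋃ I_n. Then the set T − ⋃ J_n is 4k-thick: for every s > 0, (T − ⋃ J_n) ∩ ([−4ks, −s] ∪ [s, 4ks]) ≠ ∅. -/
import Mathlib


/-- `T ⊆ ℝ` is `k`-thick: for every `s > 0`, `T ∩ ([−ks, −s] ∪ [s, ks]) ≠ ∅`. -/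
def KThick (k : ℝ) (T : Set ℝ) : Prop :=
  ∀ s : ℝ, 0 < s → ∃ t ∈ T, t ∈ Set.Icc (-(k * s)) (-s) ∪ Set.Icc s (k * s)

/-- `T ⊆ ℝ` is globally `k`-thick: `T ≠ ∅` and `T − t` is `k`-thick for every `t ∈ T`. -/
def GloballyKThick (k : ℝ) (T : Set ℝ) : Prop :=
  T.Nonempty ∧ ∀ t ∈ T, KThick k ((fun x => x - t) '' T)

/-- Let `k ≥ 1` and `T ⊆ ℝ` be globally `k`-thick with `0 ∈ T`.  Suppose `J n = (aₙ, bₙ)`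
are pairwise disjoint open intervals of finite length `ℓₙ = bₙ − aₙ`, each contained in an
open interval `I n = (cₙ, dₙ)` with `J n ± 2kℓₙ ⊆ I n`, where the `I n` are pairwise
disjoint and `0 ∉ ⋃ I n`.  Then `T − ⋃ J n` is `4k`-thick. -/
theorem stmt_4 (k : ℝ) (hk : 1 ≤ k) (T : Set ℝ)
    (hT : GloballyKThick k T) (h0 : (0 : ℝ) ∈ T)
    (a b c d : ℕ → ℝ) (hab : ∀ n, a n ≤ b n)
    (hJdisj : Pairwise (Function.onFun Disjoint fun n => Set.Ioo (a n) (b n)))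
    (hIdisj : Pairwise (Function.onFun Disjoint fun n => Set.Ioo (c n) (d n)))
    (hJI : ∀ n, Set.Ioo (a n - 2 * k * (b n - a n)) (b n + 2 * k * (b n - a n)) ⊆
      Set.Ioo (c n) (d n))
    (h0I : ∀ n, (0 : ℝ) ∉ Set.Ioo (c n) (d n)) :
    KThick (4 * k) (T \ ⋃ n, Set.Ioo (a n) (b n)) := by
  obtain ⟨-, hglob⟩ := hT
  intro s hs
  have hk0 : (0:ℝ) < k := lt_of_lt_of_le one_pos hk
  have hks : 0 < k * s := mul_pos hk0 hs
  -- each `J m` is contained in `I m`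
  have hJsubI : ∀ m, Set.Ioo (a m) (b m) ⊆ Set.Ioo (c m) (d m) := by
    intro m z hz
    have h1 := hab m
    exact hJI m ⟨by nlinarith [hz.1, hz.2], by nlinarith [hz.1, hz.2]⟩
  -- a point of `I n` not in `J n` is in no `J m`
  have keyJ : ∀ n w, w ∈ Set.Ioo (c n) (d n) → w ∉ Set.Ioo (a n) (b n) →
      w ∉ ⋃ m, Set.Ioo (a m) (b m) := by
    intro n w hwI hwJ hmem
    obtain ⟨m, hm⟩ := Set.mem_iUnion.mp hmem
    rcases eq_or_ne m n with rfl | hne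
    · exact hwJ hm
    · exact Set.disjoint_left.mp (hIdisj hne) (hJsubI m hm) hwI
  -- probe `T` at 0 with scale `2s`
  obtain ⟨y, hyT, hy⟩ := hglob 0 h0 (2*s) (by linarith)
  obtain ⟨x, hxT, hxy⟩ := hyT
  have hxy' : x = y := by simpa using hxy
  subst hxy'
  by_cases hxJ : x ∈ ⋃ m, Set.Ioo (a m) (b m)
  · obtain ⟨n, hn⟩ := Set.mem_iUnion.mp hxJ
    obtain ⟨hax, hxb⟩ := hn
    have hL : 0 < b n - a n := by linarith
    have hcd := (Set.Ioo_subset_Ioo_iff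
        (by nlinarith : a n - 2*k*(b n - a n) < b n + 2*k*(b n - a n))).mp (hJI n)
    obtain ⟨hc, hd⟩ := hcd
    have hxI : x ∈ Set.Ioo (c n) (d n) := hJI n ⟨by nlinarith, by nlinarith⟩
    have hσ1 : x - a n ≤ max (x - a n) (b n - x) := le_max_left _ _
    have hσ2 : b n - x ≤ max (x - a n) (b n - x) := le_max_right _ _
    have hσpos : 0 < max (x - a n) (b n - x) := lt_of_lt_of_le (by linarith) hσ1
    have hσL : max (x - a n) (b n - x) ≤ b n - a n := max_le (by linarith) (by linarith)
    -- probe `T` at `x` with scale `σ = max (x - a n) (b n - x)`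
    obtain ⟨z, hzT, hz⟩ := hglob x hxT _ hσpos
    obtain ⟨w, hwT, hwz⟩ := hzT
    have hwz' : w - x = z := by simpa using hwz
    have hkσ : k * max (x - a n) (b n - x) ≤ k * (b n - a n) :=
      mul_le_mul_of_nonneg_left hσL (le_of_lt hk0)
    have hkL0 : 0 < k * (b n - a n) := mul_pos hk0 hL
    rcases hz with ⟨hz1, hz2⟩ | ⟨hz1, hz2⟩
    · -- `w` landed to the left of `J n`
      have hwa : w ≤ a n := by linarith
      have hwlow : x - k * (b n - a n) ≤ w := by linarith
      have hwI : w ∈ Set.Ioo (c n) (d n) := ⟨by linarith, by linarith⟩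
      have hwnJ : w ∉ Set.Ioo (a n) (b n) := by
        intro h; linarith [h.1]
      refine ⟨w, ⟨hwT, keyJ n w hwI hwnJ⟩, ?_⟩
      rcases hy with ⟨hy1, hy2⟩ | ⟨hy1, hy2⟩
      · -- `x` negative
        have hd0 : d n ≤ 0 := by
          by_contra h
          exact h0I n ⟨by linarith [hxI.1], by linarith⟩
        have hB0 : b n + 2*k*(b n - a n) ≤ 0 := le_trans hd hd0
        exact Or.inl ⟨by linarith, by linarith⟩
      · -- `x` positive
        have hc0 : 0 ≤ c n := by
          by_contra h
          exact h0I n ⟨lt_of_not_ge h, by linarith [hxI.2]⟩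
        have hA : 2*k*(b n - a n) ≤ a n := by linarith
        exact Or.inr ⟨by linarith, by linarith⟩
    · -- `w` landed to the right of `J n`
      have hwb : b n ≤ w := by linarith
      have hwup : w ≤ x + k * (b n - a n) := by linarith
      have hwI : w ∈ Set.Ioo (c n) (d n) := ⟨by linarith, by linarith⟩
      have hwnJ : w ∉ Set.Ioo (a n) (b n) := by
        intro h; linarith [h.2]
      refine ⟨w, ⟨hwT, keyJ n w hwI hwnJ⟩, ?_⟩
      rcases hy with ⟨hy1, hy2⟩ | ⟨hy1, hy2⟩
      · -- `x` negative
        have hd0 : d n ≤ 0 := by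
          by_contra h
          exact h0I n ⟨by linarith [hxI.1], by linarith⟩
        have hB0 : b n + 2*k*(b n - a n) ≤ 0 := le_trans hd hd0
        exact Or.inl ⟨by linarith, by linarith⟩
      · -- `x` positive
        have hc0 : 0 ≤ c n := by
          by_contra h
          exact h0I n ⟨lt_of_not_ge h, by linarith [hxI.2]⟩
        have hA : 2*k*(b n - a n) ≤ a n := by linarith
        exact Or.inr ⟨by linarith, by linarith⟩
  · refine ⟨x, ⟨hxT, hxJ⟩, ?_⟩
    rcases hy with ⟨hy1, hy2⟩ | ⟨hy1, hy2⟩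
    · exact Or.inl ⟨by linarith, by linarith⟩
    · exact Or.inr ⟨by linarith, by linarith⟩
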